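/- Feasible step sizes for predictor–corrector path tracking: fix t* > t_k, let x : [t_k, t*] → E be a solution path with H(x(t), t) = 0 for all t ∈ [t_k, t*], and let x̂ : [t_k, t*] → E be a prediction path of order p ≥ 1, i.e., ‖x(t) − x̂(t)‖ ≤ η_p·(t − t_k)^p for all t ∈ [t_k, t*], with η_p ≥ 0. Let D ⊆ E be an open convex set containing x(t) and x̂(t) for all t ∈ [t_k, t*], on which, for every t ∈ [t_k, t*], H_x(u, t) is injective for all u ∈ D and the Lipschitz condition ‖H_x(v, t)† ∘ (H_x(u + s(v − u), t) − H_x(u, t))‖ ≤ ω·s·‖v − u‖ holds for all u, v ∈ D and s ∈ [0, 1], where ω > 0. Let τ > 0, let N ≥ 1 be an integer, set δ := ((ω/2)·τ / (1 + (ω/2)·τ))^(1/(2N)), and assume the closed ball of radius 2/ω around x(t_k + Δt_k) is contained in D. Then for every step size Δt_k with 0 ≤ Δt_k ≤ min{ ((√(4δ + 1) − 1)/(ω·η_p))^(1/p), t* − t_k }, the Newton iterates x^{j+1} = x^j − H_x(x^j, t_{k+1})† H(x^j, t_{k+1}) for the system u ↦ H(u, t_{k+1}) at t_{k+1} := t_k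 + Δt_k, started at x^0 = x̂(t_{k+1}), achieve accuracy τ towards the solution point after N steps: ‖x^N − x(t_{k+1})‖ ≤ τ. -/

import Mathlib

noncomputable def pinv {n m : ℕ}
    (A : EuclideanSpace ℂ (Fin n) →L[ℂ] EuclideanSpace ℂ (Fin m)) :
    EuclideanSpace ℂ (Fin m) →L[ℂ] EuclideanSpace ℂ (Fin n) :=
  (ContinuousLinearMap.inverse ((ContinuousLinearMap.adjoint A) ∘L A)) ∘L
    ContinuousLinearMap.adjoint A

/-- Newton iteration for the system `u ↦ H(u, t)` at a fixed parameter value `t`. -/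
noncomputable def newtonH {n m : ℕ}
    (H : EuclideanSpace ℂ (Fin n) × ℝ → EuclideanSpace ℂ (Fin m)) (t : ℝ)
    (y0 : EuclideanSpace ℂ (Fin n)) : ℕ → EuclideanSpace ℂ (Fin n)
  | 0 => y0
  | (j+1) => newtonH H t y0 j -
      pinv (fderiv ℂ (fun v => H (v, t)) (newtonH H t y0 j)) (H (newtonH H t y0 j, t))


theorem pinv_comp_self {n m : ℕ}
    (A : EuclideanSpace ℂ (Fin n) →L[ℂ] EuclideanSpace ℂ (Fin m))
    (hA : Function.Injective A) :
    (pinv A) ∘L A = ContinuousLinearMap.id ℂ _ := by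
  unfold pinv
  set B := (ContinuousLinearMap.adjoint A) ∘L A with hB
  have hBinj : Function.Injective B := by
    intro u v huv
    have h : ∀ w, B w = 0 → w = 0 := by
      intro w hw
      have : inner ℂ (A w) (A w) = (0 : ℂ) := by
        rw [← ContinuousLinearMap.adjoint_inner_left]
        simp only [hB, ContinuousLinearMap.comp_apply] at hw
        rw [hw]; simp
      have : A w = 0 := by rwa [inner_self_eq_zero] at this
      exact hA (by simpa using this)
    have := h (u - v) (by simp [map_sub, huv])
    exact sub_eq_zero.mp this
  have hBbij : Function.Bijective (B.toLinearMap) :=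
    ⟨hBinj, (LinearMap.injective_iff_surjective).mp hBinj⟩
  let e : EuclideanSpace ℂ (Fin n) ≃ₗ[ℂ] EuclideanSpace ℂ (Fin n) :=
    LinearEquiv.ofBijective B.toLinearMap hBbij
  let e' : EuclideanSpace ℂ (Fin n) ≃L[ℂ] EuclideanSpace ℂ (Fin n) :=
    e.toContinuousLinearEquiv
  have hcoe : (e' : EuclideanSpace ℂ (Fin n) →L[ℂ] EuclideanSpace ℂ (Fin n)) = B := by
    ext u; rfl
  have hinv : ContinuousLinearMap.inverse B = (e'.symm :
      EuclideanSpace ℂ (Fin n) →L[ℂ] EuclideanSpace ℂ (Fin n)) := by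
    rw [← hcoe, ContinuousLinearMap.inverse_equiv]
  ext1 u
  simp only [ContinuousLinearMap.comp_apply, ContinuousLinearMap.id_apply, hinv]
  have : (ContinuousLinearMap.adjoint A) (A u) = B u := rfl
  rw [this, ← hcoe]
  exact e'.symm_apply_apply u


theorem newton_step_est {n m : ℕ}
    (H : EuclideanSpace ℂ (Fin n) × ℝ → EuclideanSpace ℂ (Fin m))
    (hH : ContDiff ℝ 1 H)
    (hHdiff : ∀ (u : EuclideanSpace ℂ (Fin n)) (t : ℝ),
      DifferentiableAt ℂ (fun v => H (v, t)) u)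
    (t : ℝ) (D : Set (EuclideanSpace ℂ (Fin n))) (hDconv : Convex ℝ D)
    (xs y : EuclideanSpace ℂ (Fin n)) (hxs : xs ∈ D) (hy : y ∈ D)
    (hsol : H (xs, t) = 0) (ω : ℝ) (hω : 0 ≤ ω)
    (hinj : Function.Injective (fderiv ℂ (fun v => H (v, t)) y))
    (hLipt : ∀ u ∈ D, ∀ s ∈ Set.Icc (0:ℝ) 1,
      ‖(pinv (fderiv ℂ (fun w => H (w, t)) y)) ∘L
          (fderiv ℂ (fun w => H (w, t)) (u + s • (y - u)) -
            fderiv ℂ (fun w => H (w, t)) u)‖ ≤ ω * s * ‖y - u‖) :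
    ‖y - pinv (fderiv ℂ (fun v => H (v, t)) y) (H (y, t)) - xs‖ ≤
      ω / 2 * ‖y - xs‖ ^ 2 := by
  set A : EuclideanSpace ℂ (Fin n) →
      EuclideanSpace ℂ (Fin n) →L[ℂ] EuclideanSpace ℂ (Fin m) :=
    fun u => fderiv ℂ (fun v => H (v, t)) u with hA
  set d : EuclideanSpace ℂ (Fin n) := y - xs with hd
  set z : ℝ → EuclideanSpace ℂ (Fin n) := fun s => xs + s • d with hz
  set L := pinv (A y) with hL
  have hz0 : z 0 = xs := by simp [hz]
  have hz1 : z 1 = y := by simp [hz, hd]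
  have hderiv : ∀ s : ℝ, HasDerivAt (fun s => H (z s, t)) ((A (z s)) d) s := by
    intro s
    have h1 : HasDerivAt z d s := by
      exact (((hasDerivAt_id s).smul_const d).const_add xs).congr_deriv (one_smul ℝ d)
    have h2 : HasFDerivAt (fun v => H (v, t))
        ((A (z s)).restrictScalars ℝ) (z s) :=
      ((hHdiff (z s) t).hasFDerivAt).restrictScalars ℝ
    exact h2.comp_hasDerivAt s h1
  have hg : ContDiff ℝ 1 (fun s => H (z s, t)) := by
    apply hH.comp
    exact (contDiff_const.add (contDiff_id.smul contDiff_const)).prodMk contDiff_const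
  have hcont : Continuous (fun s => (A (z s)) d) := by
    have : (fun s => (A (z s)) d) = deriv (fun s => H (z s, t)) :=
      funext fun s => ((hderiv s).deriv).symm
    rw [this]
    exact hg.continuous_deriv le_rfl
  have hint : IntervalIntegrable (fun s => (A (z s)) d) MeasureTheory.volume 0 1 :=
    hcont.intervalIntegrable 0 1
  have hftc : (∫ s in (0:ℝ)..1, (A (z s)) d) = H (y, t) := by
    rw [intervalIntegral.integral_eq_sub_of_hasDerivAt
      (fun s _ => hderiv s) hint, hz1, hz0, hsol, sub_zero]
  have hid : L ∘L (A y) = ContinuousLinearMap.id ℂ _ := pinv_comp_self (A y) hinj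
  have hLd : ∀ w, L ((A y) w) = w := by
    intro w
    have := congrArg (fun T => T w) hid
    simpa using this
  have key : y - L (H (y, t)) - xs =
      ∫ s in (0:ℝ)..1, (L ∘L (A y - A (z s))) d := by
    have h1 : L (H (y, t)) = ∫ s in (0:ℝ)..1, L ((A (z s)) d) := by
      rw [← hftc, L.intervalIntegral_comp_comm hint]
    have h2 : IntervalIntegrable (fun s => L ((A (z s)) d))
        MeasureTheory.volume 0 1 := (L.continuous.comp hcont).intervalIntegrable 0 1
    have h3 : (∫ s in (0:ℝ)..1, d) = d := by simp
    calc y - L (H (y, t)) - xs = d - ∫ s in (0:ℝ)..1, L ((A (z s)) d) := by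
          rw [h1, hd]; abel
      _ = (∫ s in (0:ℝ)..1, d) - ∫ s in (0:ℝ)..1, L ((A (z s)) d) := by rw [h3]
      _ = ∫ s in (0:ℝ)..1, (d - L ((A (z s)) d)) := by
          rw [intervalIntegral.integral_sub (by simp) h2]
      _ = ∫ s in (0:ℝ)..1, (L ∘L (A y - A (z s))) d := by
          congr 1; funext s
          simp only [ContinuousLinearMap.comp_apply, ContinuousLinearMap.sub_apply,
            map_sub, hLd]
  rw [key]
  have hbound : ∀ s ∈ Set.Icc (0:ℝ) 1,
      ‖(L ∘L (A y - A (z s))) d‖ ≤ ω * (1 - s) * ‖d‖ ^ 2 := by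
    intro s hs
    have hzD : z s ∈ D := hDconv.add_smul_sub_mem hxs hy hs
    have := hLipt (z s) hzD 1 (by norm_num)
    have heq : z s + (1:ℝ) • (y - z s) = y := by simp
    rw [heq] at this
    have hyz : y - z s = (1 - s) • d := by
      rw [hz, hd]; simp only []
      rw [sub_smul, one_smul]; abel
    have hnyz : ‖y - z s‖ = (1 - s) * ‖d‖ := by
      rw [hyz, norm_smul, Real.norm_eq_abs, abs_of_nonneg (by linarith [hs.2])]
    rw [hnyz] at this
    calc ‖(L ∘L (A y - A (z s))) d‖ ≤ ‖L ∘L (A y - A (z s))‖ * ‖d‖ :=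
          (L ∘L (A y - A (z s))).le_opNorm d
      _ ≤ (ω * 1 * ((1 - s) * ‖d‖)) * ‖d‖ := by
          apply mul_le_mul_of_nonneg_right this (norm_nonneg d)
      _ = ω * (1 - s) * ‖d‖ ^ 2 := by ring
  have hcg : Continuous (fun s : ℝ => ω * (1 - s) * ‖d‖ ^ 2) :=
    ((continuous_const.mul (continuous_const.sub continuous_id)).mul continuous_const)
  have hintb : IntervalIntegrable (fun s => ω * (1 - s) * ‖d‖ ^ 2)
      MeasureTheory.volume 0 1 := hcg.intervalIntegrable 0 1
  have hIg : (∫ s in (0:ℝ)..1, ω * (1 - s) * ‖d‖ ^ 2) = ω / 2 * ‖d‖ ^ 2 := by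
    have h5 : (∫ s in (0:ℝ)..1, ω * (1 - s) * ‖d‖ ^ 2) =
        (∫ s in (0:ℝ)..1, (1 - s)) * (ω * ‖d‖ ^ 2) := by
      rw [← intervalIntegral.integral_mul_const]
      congr 1; funext s; ring
    have h4 : (∫ s in (0:ℝ)..1, (1 - s)) = 1/2 := by
      have hii : IntervalIntegrable (fun s : ℝ => s) MeasureTheory.volume 0 1 :=
        continuous_id.intervalIntegrable 0 1
      rw [intervalIntegral.integral_sub intervalIntegrable_const hii, integral_id]
      norm_num
    rw [h5, h4]; ring
  have hle := intervalIntegral.norm_integral_le_abs_of_norm_le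
    (f := fun s => (L ∘L (A y - A (z s))) d)
    (μ := MeasureTheory.volume) (a := 0) (b := 1)
    (g := fun s => ω * (1 - s) * ‖d‖ ^ 2)
    (by
      filter_upwards [MeasureTheory.ae_restrict_mem measurableSet_Ioc] with s hs
      have hs' : s ∈ Set.Icc (0:ℝ) 1 := by
        rw [Set.uIoc_of_le (by norm_num : (0:ℝ) ≤ 1)] at hs
        exact ⟨le_of_lt hs.1, hs.2⟩
      exact hbound s hs') hintb
  rw [hIg, abs_of_nonneg (by positivity)] at hle
  exact hle


theorem two_mul_le_two_pow (N : ℕ) (hN : 1 ≤ N) : 2 * N ≤ 2 ^ N := by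
  induction N with
  | zero => omega
  | succ k ih =>
    rcases Nat.eq_or_lt_of_le hN with h | h
    · have hk0 : k = 0 := by omega
      subst hk0; norm_num
    · have hk : 1 ≤ k := by omega
      have h2 : 2 ≤ 2 ^ k := by
        calc 2 = 2 ^ 1 := by norm_num
        _ ≤ 2 ^ k := Nat.pow_le_pow_right (by norm_num) hk
      have := ih hk
      calc 2 * (k + 1) = 2 * k + 2 := by ring
      _ ≤ 2 ^ k + 2 ^ k := by omega
      _ = 2 ^ (k + 1) := by ring


set_option maxHeartbeats 2000000 in
/-- Feasible step sizes for predictor–corrector path tracking: for every step size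
`Δt_k` below the maximal feasible step size, Newton's method for `u ↦ H(u, t_k + Δt_k)`
started at the predicted point `x̂(t_k + Δt_k)` achieves accuracy `τ` towards the
solution point `x(t_k + Δt_k)` after `N` steps. -/
theorem feasible_step_sizes {n m : ℕ} (hn : 0 < n) (hnm : n ≤ m)
    (H : EuclideanSpace ℂ (Fin n) × ℝ → EuclideanSpace ℂ (Fin m))
    (hH : ContDiff ℝ 1 H)
    (hHdiff : ∀ (u : EuclideanSpace ℂ (Fin n)) (t : ℝ),
      DifferentiableAt ℂ (fun v => H (v, t)) u)
    (tk tstar : ℝ) (htk : tk < tstar)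
    (x xhat : ℝ → EuclideanSpace ℂ (Fin n))
    (hsol : ∀ t ∈ Set.Icc tk tstar, H (x t, t) = 0)
    (ηp : ℝ) (hηp : 0 ≤ ηp) (p : ℕ) (hp : 1 ≤ p)
    (hpred : ∀ t ∈ Set.Icc tk tstar, ‖x t - xhat t‖ ≤ ηp * (t - tk) ^ p)
    (D : Set (EuclideanSpace ℂ (Fin n))) (hDopen : IsOpen D) (hDconv : Convex ℝ D)
    (hmem : ∀ t ∈ Set.Icc tk tstar, x t ∈ D ∧ xhat t ∈ D)
    (ω : ℝ) (hω : 0 < ω)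
    (hinj : ∀ t ∈ Set.Icc tk tstar, ∀ u ∈ D,
      Function.Injective (fderiv ℂ (fun v => H (v, t)) u))
    (hLip : ∀ t ∈ Set.Icc tk tstar, ∀ u ∈ D, ∀ v ∈ D, ∀ s ∈ Set.Icc (0:ℝ) 1,
      ‖(pinv (fderiv ℂ (fun w => H (w, t)) v)) ∘L
          (fderiv ℂ (fun w => H (w, t)) (u + s • (v - u)) -
            fderiv ℂ (fun w => H (w, t)) u)‖ ≤ ω * s * ‖v - u‖)
    (τ : ℝ) (hτ : 0 < τ) (N : ℕ) (hN : 1 ≤ N)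
    (δ : ℝ) (hδ : δ = (ω / 2 * τ / (1 + ω / 2 * τ)) ^ ((1 : ℝ) / (2 * (N : ℝ))))
    (Δtk : ℝ) (hΔtk0 : 0 ≤ Δtk)
    (hball : Metric.closedBall (x (tk + Δtk)) (2 / ω) ⊆ D)
    (hΔtk : Δtk ≤ min (((Real.sqrt (4 * δ + 1) - 1) / (ω * ηp)) ^ ((1 : ℝ) / (p : ℝ)))
        (tstar - tk)) :
    ‖newtonH H (tk + Δtk) (xhat (tk + Δtk)) N - x (tk + Δtk)‖ ≤ τ := by
  set t1 : ℝ := tk + Δtk with ht1def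
  have ht1 : t1 ∈ Set.Icc tk tstar := by
    constructor
    · linarith
    · have := le_trans hΔtk (min_le_right _ _)
      linarith
  set xs : EuclideanSpace ℂ (Fin n) := x t1 with hxsdef
  have hxsD : xs ∈ D := (hmem t1 ht1).1
  have hx0D : xhat t1 ∈ D := (hmem t1 ht1).2
  have hsol1 : H (xs, t1) = 0 := hsol t1 ht1
  set c : ℝ := ω / 2 * τ with hcdef
  have hc : 0 < c := by positivity
  have hbase : 0 < c / (1 + c) := by positivity
  have hbase1 : c / (1 + c) < 1 := by
    rw [div_lt_one (by linarith)]; linarith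
  have hδ0 : 0 < δ := by rw [hδ]; positivity
  have hδ1 : δ < 1 := by
    rw [hδ]
    apply Real.rpow_lt_one (le_of_lt hbase) hbase1
    positivity
  -- initial estimate
  set X : ℝ := Real.sqrt (4 * δ + 1) - 1 with hXdef
  have hX0 : 0 ≤ X := by
    rw [hXdef]
    have : (1:ℝ) = Real.sqrt 1 := by simp
    nlinarith [Real.sqrt_le_sqrt (show (1:ℝ) ≤ 4 * δ + 1 by linarith),
      Real.sqrt_one]
  have hXδ : X / 2 ≤ δ := by
    have hs : Real.sqrt (4 * δ + 1) ^ 2 = 4 * δ + 1 :=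
      Real.sq_sqrt (by linarith)
    nlinarith [hX0]
  have h0 : ω * ‖xhat t1 - xs‖ ≤ X := by
    have hpred1 : ‖xs - xhat t1‖ ≤ ηp * Δtk ^ p := by
      have := hpred t1 ht1
      simpa [ht1def] using this
    rw [norm_sub_rev]
    rcases eq_or_lt_of_le hηp with h | h
    · have : ‖xs - xhat t1‖ ≤ 0 := by
        rw [← h] at hpred1; simpa using hpred1
      have : ‖xs - xhat t1‖ = 0 := le_antisymm this (norm_nonneg _)
      rw [this, mul_zero]; exact hX0
    · -- ηp > 0
      have hωηp : 0 < ω * ηp := by positivity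
      have hm := le_trans hΔtk (min_le_left _ _)
      have hpow : Δtk ^ p ≤ X / (ω * ηp) := by
        have hb : 0 ≤ X / (ω * ηp) := by positivity
        have hp0 : (p : ℝ) ≠ 0 := Nat.cast_ne_zero.mpr (by omega)
        have h1 : Δtk ^ (p : ℝ) ≤ ((X / (ω * ηp)) ^ ((1:ℝ) / (p:ℝ))) ^ (p : ℝ) :=
          Real.rpow_le_rpow hΔtk0 hm (by positivity)
        have h2 : ((X / (ω * ηp)) ^ ((1:ℝ) / (p:ℝ))) ^ (p : ℝ) = X / (ω * ηp) := by
          rw [← Real.rpow_mul hb, one_div, inv_mul_cancel₀ hp0, Real.rpow_one]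
        rw [← Real.rpow_natCast Δtk p]
        rw [h2] at h1
        exact h1
      calc ω * ‖xs - xhat t1‖ ≤ ω * (ηp * Δtk ^ p) := by
            apply mul_le_mul_of_nonneg_left hpred1 (le_of_lt hω)
        _ = (ω * ηp) * Δtk ^ p := by ring
        _ ≤ (ω * ηp) * (X / (ω * ηp)) := by
            apply mul_le_mul_of_nonneg_left hpow (le_of_lt hωηp)
        _ = X := by field_simp
  -- induction
  have hLipt : ∀ y ∈ D, ∀ u ∈ D, ∀ s ∈ Set.Icc (0:ℝ) 1,
      ‖(pinv (fderiv ℂ (fun w => H (w, t1)) y)) ∘L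
          (fderiv ℂ (fun w => H (w, t1)) (u + s • (y - u)) -
            fderiv ℂ (fun w => H (w, t1)) u)‖ ≤ ω * s * ‖y - u‖ :=
    fun y hy u hu s hs => hLip t1 ht1 u hu y hy s hs
  set xj : ℕ → EuclideanSpace ℂ (Fin n) := newtonH H t1 (xhat t1) with hxj
  have hmain : ∀ j : ℕ, xj j ∈ D ∧ ω / 2 * ‖xj j - xs‖ ≤ δ ^ (2 ^ j) := by
    intro j
    induction j with
    | zero =>
      refine ⟨hx0D, ?_⟩
      simp only [pow_one, pow_zero]
      calc ω / 2 * ‖xj 0 - xs‖ = (ω * ‖xhat t1 - xs‖) / 2 := by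
            rw [hxj]; show ω / 2 * ‖xhat t1 - xs‖ = _; ring
        _ ≤ X / 2 := by linarith
        _ ≤ δ := hXδ
    | succ j ih =>
      obtain ⟨hjD, hje⟩ := ih
      have hδpow1 : δ ^ (2 ^ j) ≤ 1 := pow_le_one₀ (le_of_lt hδ0) (le_of_lt hδ1)
      have hstep : ‖xj (j+1) - xs‖ ≤ ω / 2 * ‖xj j - xs‖ ^ 2 := by
        have hthis := newton_step_est H hH hHdiff t1 D hDconv xs (xj j) hxsD hjD hsol1
          ω (le_of_lt hω) (hinj t1 ht1 (xj j) hjD) (hLipt (xj j) hjD)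
        have hdef : xj (j+1) =
            xj j - pinv (fderiv ℂ (fun v => H (v, t1)) (xj j)) (H (xj j, t1)) := rfl
        rw [hdef]
        exact hthis
      have hnext : ω / 2 * ‖xj (j+1) - xs‖ ≤ δ ^ (2 ^ (j+1)) := by
        calc ω / 2 * ‖xj (j+1) - xs‖ ≤ ω / 2 * (ω / 2 * ‖xj j - xs‖ ^ 2) := by
              apply mul_le_mul_of_nonneg_left hstep (by positivity)
          _ = (ω / 2 * ‖xj j - xs‖) ^ 2 := by ring
          _ ≤ (δ ^ (2 ^ j)) ^ 2 := by
              apply pow_le_pow_left₀ (by positivity) hje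
          _ = δ ^ (2 ^ (j+1)) := by rw [← pow_mul, pow_succ]
      refine ⟨?_, hnext⟩
      apply hball
      rw [Metric.mem_closedBall, dist_eq_norm]
      have hδpow1' : δ ^ (2 ^ (j+1)) ≤ 1 := pow_le_one₀ (le_of_lt hδ0) (le_of_lt hδ1)
      have h2ω : (0:ℝ) < 2 / ω := by positivity
      calc ‖xj (j+1) - xs‖ = (2 / ω) * (ω / 2 * ‖xj (j+1) - xs‖) := by
            field_simp
        _ ≤ (2 / ω) * 1 := by
            apply mul_le_mul_of_nonneg_left (le_trans hnext hδpow1') (le_of_lt h2ω)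
        _ = 2 / ω := mul_one _
  -- conclude
  have hfinal := (hmain N).2
  have hchain : δ ^ (2 ^ N) ≤ c := by
    have h1 : δ ^ (2 ^ N) ≤ δ ^ (2 * N) :=
      pow_le_pow_of_le_one (le_of_lt hδ0) (le_of_lt hδ1) (two_mul_le_two_pow N hN)
    have h2 : δ ^ (2 * N) = c / (1 + c) := by
      rw [hδ, ← Real.rpow_natCast _ (2 * N), ← Real.rpow_mul (le_of_lt hbase)]
      have hNe : (2 * (N:ℝ)) ≠ 0 := by
        have : (0:ℝ) < (N:ℝ) := by exact_mod_cast (by omega : 0 < N)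
        positivity
      rw [show ((1:ℝ) / (2 * (N:ℝ)) * ((2 * N : ℕ) : ℝ)) = 1 by
        push_cast; field_simp]
      exact Real.rpow_one _
    have h3 : c / (1 + c) ≤ c := by
      apply div_le_self (le_of_lt hc) (by linarith)
    linarith
  have : ω / 2 * ‖xj N - xs‖ ≤ ω / 2 * τ := le_trans hfinal hchain
  have hω2 : (0:ℝ) < ω / 2 := by positivity
  calc ‖newtonH H t1 (xhat t1) N - xs‖ = ‖xj N - xs‖ := by rw [hxj]
    _ ≤ τ := by
      by_contra hcon
      push_neg at hcon
      nlinarith
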